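/- Let κ > 1, let n ≥ 1 be an integer, let A ≥ 0, L ≥ 1, and let r : ℤ → (0,∞) satisfy both the (κ,n,A)-flaring property and the L-Lipschitz growth condition (with J = ℤ). If j₀ ∈ ℤ satisfies r_{j₀} > A, then, setting κ' = κ^{1/n}, there exists ε ∈ {−1, +1} such that for every integer m ≥ 1, r_{j₀ + εm} ≥ L^{−n} · κ'^{m} · r_{j₀}. -/

import Mathlib

/-- If `r : ℤ → (0,∞)` satisfies the `(κ,n,A)`-flaring property and the
`L`-Lipschitz growth condition (with `J = ℤ`), and `r j₀ > A`, then, with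
`κ' = κ^(1/n)`, there is a direction `ε ∈ {−1,+1}` such that
`r (j₀ + ε·m) ≥ L^(−n) · κ'^m · r j₀` for all integers `m ≥ 1`. -/
theorem flaring_full_exponential_growth
    (κ : ℝ) (hκ : 1 < κ) (n : ℤ) (hn : 1 ≤ n) (A : ℝ) (hA : 0 ≤ A)
    (L : ℝ) (hL : 1 ≤ L)
    (r : ℤ → ℝ) (hpos : ∀ j : ℤ, 0 < r j)
    (hflare : ∀ j : ℤ, A < r j → κ * r j ≤ max (r (j - n)) (r (j + n)))
    (hlip : ∀ j k : ℤ, |j - k| = 1 → r j ≤ L * r k)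
    (j₀ : ℤ) (hj₀ : A < r j₀) :
    ∃ ε : ℤ, (ε = 1 ∨ ε = -1) ∧
      ∀ m : ℕ, 1 ≤ m →
        L ^ (-n) * (κ ^ ((1 : ℝ) / (n : ℝ))) ^ m * r j₀ ≤ r (j₀ + ε * (m : ℤ)) := by
  have hκ0 : (0:ℝ) < κ := lt_trans one_pos hκ
  have hL0 : (0:ℝ) < L := lt_of_lt_of_le one_pos hL
  have hn0 : (0:ℝ) < (n:ℝ) := by exact_mod_cast lt_of_lt_of_le one_pos hn
  obtain ⟨ε, hε, hbase⟩ : ∃ ε : ℤ, (ε = 1 ∨ ε = -1) ∧ κ * r j₀ ≤ r (j₀ + ε * n) := by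
    rcases le_max_iff.mp (hflare j₀ hj₀) with h | h
    · exact ⟨-1, Or.inr rfl, by simpa [sub_eq_add_neg] using h⟩
    · exact ⟨1, Or.inl rfl, by simpa using h⟩
  refine ⟨ε, hε, ?_⟩
  -- symmetric flaring
  have hmax' : ∀ j : ℤ, A < r j → κ * r j ≤ max (r (j - ε * n)) (r (j + ε * n)) := by
    intro j hj
    rcases hε with h1 | h1 <;> subst h1 <;>
      simpa [sub_eq_add_neg, max_comm, neg_mul, one_mul, neg_neg] using hflare j hj
  -- growth chain along multiples of n
  have key : ∀ k : ℕ, κ * r (j₀ + ε * k * n) ≤ r (j₀ + ε * (k + 1) * n) ∧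
      κ ^ k * r j₀ ≤ r (j₀ + ε * k * n) := by
    intro k
    induction k with
    | zero =>
      exact ⟨by simpa using hbase, by simp⟩
    | succ k ih =>
      obtain ⟨h1, h2⟩ := ih
      have hgrow : κ ^ (k + 1) * r j₀ ≤ r (j₀ + ε * (k + 1) * n) := by
        calc κ ^ (k + 1) * r j₀ = κ * (κ ^ k * r j₀) := by ring
          _ ≤ κ * r (j₀ + ε * k * n) := by
              exact mul_le_mul_of_nonneg_left h2 (le_of_lt hκ0)
          _ ≤ r (j₀ + ε * (k + 1) * n) := h1
      refine ⟨?_, hgrow⟩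
      have hA' : A < r (j₀ + ε * (k + 1) * n) := by
        have h3 : (1:ℝ) ≤ κ ^ (k + 1) := one_le_pow₀ (le_of_lt hκ)
        have : r j₀ ≤ κ ^ (k + 1) * r j₀ := le_mul_of_one_le_left (le_of_lt (hpos j₀)) h3
        linarith
      have hm := hmax' _ hA'
      have e1 : j₀ + ε * (k + 1) * n - ε * n = j₀ + ε * k * n := by push_cast; ring
      have e2 : j₀ + ε * (k + 1) * n + ε * n = j₀ + ε * (k + 1 + 1) * n := by push_cast; ring
      rw [e1, e2] at hm
      rcases le_max_iff.mp hm with h | h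
      · exfalso
        have hp1 := hpos (j₀ + ε * k * n)
        have hp2 := hpos (j₀ + ε * ((k:ℤ)+1) * n)
        nlinarith [mul_le_mul_of_nonneg_left h1 (le_of_lt hκ0)]
      · have : ((k:ℤ) + 1 + 1) = ((k+1 : ℕ) + 1 : ℤ) := by push_cast; ring
        rw [this] at h
        push_cast
        push_cast at h
        linarith
  -- Lipschitz along direction ε
  have habs : |ε| = 1 := by rcases hε with h | h <;> subst h <;> norm_num
  have hlipε : ∀ (t : ℕ) (j : ℤ), r (j + ε * t) ≤ L ^ t * r j := by
    intro t
    induction t with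
    | zero => intro j; simp
    | succ t ih =>
      intro j
      have hd : |(j + ε * ((t:ℤ)+1)) - (j + ε * t)| = 1 := by
        have : (j + ε * ((t:ℤ)+1)) - (j + ε * t) = ε := by ring
        rw [this, habs]
      have h1 : r (j + ε * ((t:ℤ)+1)) ≤ L * r (j + ε * t) := hlip _ _ hd
      have h2 := ih j
      have e : ((t+1:ℕ):ℤ) = (t:ℤ)+1 := by push_cast; ring
      rw [e, pow_succ]
      calc r (j + ε * ((t:ℤ)+1)) ≤ L * r (j + ε * t) := h1
        _ ≤ L * (L ^ t * r j) := mul_le_mul_of_nonneg_left h2 (le_of_lt hL0)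
        _ = L ^ t * L * r j := by ring
  -- main estimate
  intro m hm
  set N : ℕ := n.toNat with hNdef
  have hNn : (N:ℤ) = n := Int.toNat_of_nonneg (by omega)
  have hN1 : 1 ≤ N := by omega
  set k : ℕ := (m + N - 1) / N with hkdef
  have hdm := Nat.div_add_mod (m + N - 1) N
  have hmod := Nat.mod_lt (m + N - 1) (by omega : 0 < N)
  have hdm2 : k * N + (m + N - 1) % N = m + N - 1 := by rw [mul_comm]; exact hdm
  have hkN1 : m ≤ k * N := by omega
  have hkN2 : k * N ≤ m + N - 1 := Nat.div_mul_le_self _ _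
  set t : ℕ := k * N - m with htdef
  have htN : t ≤ N := by omega
  -- position identity
  have epos : j₀ + ε * k * n = (j₀ + ε * m) + ε * t := by
    have : (t:ℤ) = (k:ℤ) * N - m := by
      have := hkN1; push_cast [htdef, Nat.cast_sub hkN1]; ring
    rw [this, hNn]; ring
  have hchain1 : r (j₀ + ε * k * n) ≤ L ^ t * r (j₀ + ε * m) := by
    rw [epos]; exact hlipε t _
  have hchain2 : κ ^ k * r j₀ ≤ r (j₀ + ε * k * n) := (key k).2
  have hLt : (0:ℝ) < L ^ t := pow_pos hL0 _
  have hrm : (L ^ t)⁻¹ * (κ ^ k * r j₀) ≤ r (j₀ + ε * m) := by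
    rw [inv_mul_le_iff₀ hLt]
    calc κ ^ k * r j₀ ≤ r (j₀ + ε * k * n) := hchain2
      _ ≤ L ^ t * r (j₀ + ε * m) := hchain1
  refine le_trans ?_ hrm
  have hL1 : L ^ (-n) ≤ (L ^ t)⁻¹ := by
    rw [zpow_neg]
    apply inv_anti₀ hLt
    calc (L:ℝ) ^ t ≤ L ^ N := pow_le_pow_right₀ hL htN
      _ = L ^ (n:ℤ) := by rw [← hNn]; norm_cast
  have hκ1 : (κ ^ ((1 : ℝ) / (n : ℝ))) ^ m ≤ κ ^ k := by
    have e1 : (κ ^ ((1 : ℝ) / (n : ℝ))) ^ m = κ ^ (((1:ℝ)/n) * m) := by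
      rw [← Real.rpow_natCast (κ ^ ((1 : ℝ) / (n : ℝ))) m, ← Real.rpow_mul (le_of_lt hκ0)]
    have e2 : (κ:ℝ) ^ k = κ ^ ((k:ℝ)) := by rw [Real.rpow_natCast]
    rw [e1, e2]
    apply Real.rpow_le_rpow_of_exponent_le (le_of_lt hκ)
    rw [div_mul_eq_mul_div, one_mul, div_le_iff₀ hn0]
    have : (m:ℝ) ≤ (k:ℝ) * N := by exact_mod_cast hkN1
    calc (m:ℝ) ≤ (k:ℝ) * N := this
      _ = (k:ℝ) * n := by rw [← hNn]; norm_cast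
  have hκk0 : (0:ℝ) ≤ (κ ^ ((1 : ℝ) / (n : ℝ))) ^ m :=
    pow_nonneg (Real.rpow_nonneg (le_of_lt hκ0) _) _
  have hLn0 : (0:ℝ) ≤ L ^ (-n) := le_of_lt (zpow_pos hL0 _)
  calc L ^ (-n) * (κ ^ ((1 : ℝ) / (n : ℝ))) ^ m * r j₀
      ≤ (L ^ t)⁻¹ * κ ^ k * r j₀ := by
        apply mul_le_mul_of_nonneg_right _ (le_of_lt (hpos j₀))
        exact mul_le_mul hL1 hκ1 hκk0 (le_of_lt (inv_pos.mpr hLt))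
    _ = (L ^ t)⁻¹ * (κ ^ k * r j₀) := by ring
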